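/- Let A be a uniform algebra on a compact Hausdorff space Ω that is antisymmetric on Ω (every element of A that is real-valued on Ω is a constant function). Suppose f ∈ C(Ω,ℝ) is strictly positive and there exist n ∈ ℕ and elements a₁,…,aₙ, b₁,…,bₙ ∈ A such that Σᵢ aᵢ(w)bᵢ(w) = 1, Σᵢ |aᵢ(w)f(w)|² ≤ 1, and Σᵢ |bᵢ(w)f(w)⁻¹|² ≤ 1 for all w ∈ Ω. Then f ∈ Q, i.e. f = |g| for some invertible g ∈ A. -/

import Mathlib

open Filter

section Preamble

variable {Ω : Type*} [TopologicalSpace Ω] [CompactSpace Ω] [T2Space Ω]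

/-- The evaluation functional at a point `x`, as a continuous linear functional on a
subspace `A` of `C(Ω, ℂ)`. -/
noncomputable def evalFunctional (A : Submodule ℂ C(Ω, ℂ)) (x : Ω) : A →L[ℂ] ℂ :=
  LinearMap.mkContinuous
    { toFun := fun a => (a : C(Ω, ℂ)) x
      map_add' := fun a b => rfl
      map_smul' := fun c a => rfl } 1
    (fun a => le_of_le_of_eq ((a : C(Ω, ℂ)).norm_coe_le_norm x) (one_mul _).symm)

/-- `x` is in the Choquet boundary of the subspace `A ⊆ C(Ω, ℂ)` iff the evaluation
functional at `x` is an extreme point of the closed unit ball of the dual space `A*`. -/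
def InChoquet (A : Submodule ℂ C(Ω, ℂ)) (x : Ω) : Prop :=
  evalFunctional A x ∈ Set.extremePoints ℝ (Metric.closedBall (0 : A →L[ℂ] ℂ) 1)

/-- A real-valued continuous function, viewed as a complex-valued continuous function. -/
noncomputable def ofRealCM (f : C(Ω, ℝ)) : C(Ω, ℂ) :=
  ⟨fun x => (f x : ℂ), Complex.continuous_ofReal.comp f.continuous⟩

/-- The submodule `A·f = {a·f : a ∈ A}` of `C(Ω, ℂ)`. -/
noncomputable def moduleAf (A : Subalgebra ℂ C(Ω, ℂ)) (f : C(Ω, ℝ)) : Submodule ℂ C(Ω, ℂ) :=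
  (Subalgebra.toSubmodule A).map (LinearMap.mulRight ℂ (ofRealCM f))

/-- A map `S` between two `A`-submodules `X, Y` of `C(Ω, ℂ)` is an `A`-module map if
`S(a·x) = a·S(x)` for all `a ∈ A`, `x ∈ X`. -/
def IsModuleMapOn (A : Subalgebra ℂ C(Ω, ℂ)) {X Y : Submodule ℂ C(Ω, ℂ)} (S : X → Y) : Prop :=
  ∀ (a : C(Ω, ℂ)), a ∈ A → ∀ (x : X) (h : a * (x : C(Ω, ℂ)) ∈ X),
    ((S ⟨a * (x : C(Ω, ℂ)), h⟩ : C(Ω, ℂ))) = a * ((S x : C(Ω, ℂ)))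

/-- There is a surjective linear isometry from `X` onto `Y`. -/
def ExistsLinearIsometry (X Y : Submodule ℂ C(Ω, ℂ)) : Prop :=
  ∃ S : X →ₗ[ℂ] Y, Function.Surjective S ∧ ∀ x, ‖S x‖ = ‖x‖

/-- There is a surjective isometric `A`-module isomorphism from `X` onto `Y`. -/
def ExistsModuleIsometry (A : Subalgebra ℂ C(Ω, ℂ)) (X Y : Submodule ℂ C(Ω, ℂ)) : Prop :=
  ∃ S : X →ₗ[ℂ] Y, Function.Surjective S ∧ (∀ x, ‖S x‖ = ‖x‖) ∧ IsModuleMapOn A S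

/-- `X` and `Y` are almost isometric: for every `ε > 0` there is a bijective bounded
linear map `T : X → Y` with `‖T‖·‖T⁻¹‖ < 1 + ε`. -/
def AlmostIsometric (X Y : Submodule ℂ C(Ω, ℂ)) : Prop :=
  ∀ ε : ℝ, 0 < ε → ∃ T : X ≃L[ℂ] Y,
    ‖T.toContinuousLinearMap‖ * ‖T.symm.toContinuousLinearMap‖ < 1 + ε

/-- `X` and `Y` are almost `A`-isometric: for every `ε > 0` there is a bijective bounded
`A`-module map `T : X → Y` with `‖T‖·‖T⁻¹‖ < 1 + ε`. -/
def AlmostAIsometric (A : Subalgebra ℂ C(Ω, ℂ)) (X Y : Submodule ℂ C(Ω, ℂ)) : Prop :=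
  ∀ ε : ℝ, 0 < ε → ∃ T : X ≃L[ℂ] Y, IsModuleMapOn A T ∧
    ‖T.toContinuousLinearMap‖ * ‖T.symm.toContinuousLinearMap‖ < 1 + ε

/-- `f ∈ Q`: `f = |g|` for an invertible element `g` of `A`. -/
def MemQ (A : Subalgebra ℂ C(Ω, ℂ)) (f : C(Ω, ℝ)) : Prop :=
  ∃ g ∈ A, (∃ g' ∈ A, g * g' = 1) ∧ ∀ x, f x = ‖g x‖

/-- `f ∈ Q̄`: `f` is a uniform limit on `Ω` of moduli of invertible elements of `A`. -/
def MemQbar (A : Subalgebra ℂ C(Ω, ℂ)) (f : C(Ω, ℝ)) : Prop :=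
  ∃ g : ℕ → C(Ω, ℂ), (∀ n, g n ∈ A ∧ ∃ g' ∈ A, g n * g' = 1) ∧
    TendstoUniformly (fun n x => ‖g n x‖) (fun x => f x) atTop

/-- `f ∈ 𝓜_A(Ω)`: there are sequences of `A`-tuples `Kₙ`, `Hₙ` with `Kₙ.Hₙ = 1`,
`‖Kₙ(w)‖₂ → f(w)` uniformly, and `‖Hₙ(w)‖₂ → f(w)⁻¹` uniformly on `Ω`. -/
def MemM (A : Subalgebra ℂ C(Ω, ℂ)) (f : C(Ω, ℝ)) : Prop :=
  ∃ (n : ℕ → ℕ) (K H : (m : ℕ) → Fin (n m) → C(Ω, ℂ)),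
    (∀ m i, K m i ∈ A) ∧ (∀ m i, H m i ∈ A) ∧
    (∀ m (x : Ω), (∑ i, K m i x * H m i x) = 1) ∧
    TendstoUniformly (fun m x => Real.sqrt (∑ i, ‖K m i x‖ ^ 2))
      (fun x => f x) atTop ∧
    TendstoUniformly (fun m x => Real.sqrt (∑ i, ‖H m i x‖ ^ 2))
      (fun x => (f x)⁻¹) atTop

/-- The set `𝓕` of finite sums `Σᵢ |gᵢ|²` with `gᵢ ∈ A`. -/
def calF (A : Subalgebra ℂ C(Ω, ℂ)) : Set C(Ω, ℝ) :=
  {u | ∃ (n : ℕ) (g : Fin n → C(Ω, ℂ)), (∀ i, g i ∈ A) ∧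
    ∀ x, u x = ∑ i, ‖g i x‖ ^ 2}

end Preamble

open Complex ComplexConjugate in
lemma cs_eq_aux {n : ℕ} (x y : Fin n → ℂ) (h1 : ∑ i, x i * y i = 1)
    (h2 : ∑ i, ‖x i‖ ^ 2 ≤ 1) (h3 : ∑ i, ‖y i‖ ^ 2 ≤ 1) :
    ∀ i, y i = starRingEnd ℂ (x i) := by
  have key : ∑ i, normSq (x i - conj (y i)) ≤ 0 := by
    have : ∀ i, normSq (x i - conj (y i)) =
        normSq (x i) + normSq (y i) - 2 * (x i * y i).re := by
      intro i
      rw [normSq_sub, normSq_conj, Complex.conj_conj]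
    rw [Finset.sum_congr rfl fun i _ => this i]
    have hre : (∑ i, (x i * y i).re) = 1 := by
      rw [← Complex.re_sum, h1, Complex.one_re]
    have hx : ∑ i, normSq (x i) ≤ 1 := by
      simpa [Complex.sq_norm] using h2
    have hy : ∑ i, normSq (y i) ≤ 1 := by
      simpa [Complex.sq_norm] using h3
    have := Finset.sum_sub_distrib (f := fun i => normSq (x i) + normSq (y i))
      (g := fun i => 2 * (x i * y i).re) (s := Finset.univ)
    rw [this, Finset.sum_add_distrib, ← Finset.mul_sum, hre]
    linarith
  intro i
  have hnn : ∀ j ∈ Finset.univ, (0:ℝ) ≤ normSq (x j - conj (y j)) :=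
    fun j _ => normSq_nonneg _
  have := (Finset.sum_eq_zero_iff_of_nonneg hnn).1 (le_antisymm key (Finset.sum_nonneg hnn)) i
    (Finset.mem_univ i)
  have h0 : x i - conj (y i) = 0 := normSq_eq_zero.1 this
  have : conj (y i) = x i := by linear_combination -h0
  calc y i = conj (conj (y i)) := (Complex.conj_conj _).symm
    _ = conj (x i) := by rw [this]

theorem stmt_16 {Ω : Type*} [TopologicalSpace Ω] [CompactSpace Ω] [T2Space Ω]
    (A : Subalgebra ℂ C(Ω, ℂ))
    (hclosed : IsClosed (A : Set C(Ω, ℂ)))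
    (hsep : ∀ x y : Ω, x ≠ y → ∃ a ∈ A, a x ≠ a y)
    (hanti : ∀ a ∈ A, (∀ x : Ω, (a x).im = 0) → ∃ c : ℂ, ∀ x : Ω, a x = c)
    (f : C(Ω, ℝ)) (hf : ∀ x, 0 < f x)
    (n : ℕ) (a b : Fin n → C(Ω, ℂ))
    (ha : ∀ i, a i ∈ A) (hb : ∀ i, b i ∈ A)
    (hsum : ∀ w : Ω, ∑ i, a i w * b i w = 1)
    (hbd1 : ∀ w : Ω, ∑ i, ‖a i w * (f w : ℂ)‖ ^ 2 ≤ 1)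
    (hbd2 : ∀ w : Ω, ∑ i, ‖b i w * (f w : ℂ)⁻¹‖ ^ 2 ≤ 1) :
    MemQ A f := by
  rcases isEmpty_or_nonempty Ω with hΩ | hΩ
  · exact ⟨1, one_mem A, ⟨1, one_mem A, one_mul 1⟩, fun x => hΩ.elim x⟩
  · have hfne : ∀ w : Ω, (f w : ℂ) ≠ 0 := fun w => by
      exact_mod_cast (hf w).ne'
    -- Cauchy-Schwarz equality pointwise
    have hconj : ∀ (w : Ω) (i : Fin n),
        b i w = (starRingEnd ℂ) (a i w) * (f w : ℂ) * (f w : ℂ) := by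
      intro w i
      have h1 : ∑ j, (a j w * (f w : ℂ)) * (b j w * (f w : ℂ)⁻¹) = 1 := by
        have he : ∀ j, (a j w * (f w:ℂ)) * (b j w * (f w:ℂ)⁻¹) = a j w * b j w := by
          intro j
          rw [mul_mul_mul_comm, mul_inv_cancel₀ (hfne w), mul_one]
        rw [Finset.sum_congr rfl fun j _ => he j, hsum w]
      have h2 := cs_eq_aux _ _ h1 (hbd1 w) (hbd2 w) i
      rw [map_mul, Complex.conj_ofReal] at h2
      have h3 : b i w = (b i w * (f w:ℂ)⁻¹) * (f w:ℂ) :=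
        (inv_mul_cancel_right₀ (hfne w) _).symm
      rw [h3, h2]
    -- each a i * b i is real-valued, hence constant
    have hab : ∀ i : Fin n, ∃ c : ℂ, ∀ w, a i w * b i w = c := by
      intro i
      have := hanti (a i * b i) (mul_mem (ha i) (hb i)) (fun w => by
        rw [ContinuousMap.mul_apply, hconj w i]
        have : a i w * ((starRingEnd ℂ) (a i w) * (f w:ℂ) * (f w:ℂ)) =
            ((Complex.normSq (a i w) * (f w * f w) : ℝ) : ℂ) := by
          push_cast
          rw [← Complex.mul_conj]
          ring
        rw [this, Complex.ofReal_im])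
      obtain ⟨c, hc⟩ := this
      exact ⟨c, fun w => by rw [← ContinuousMap.mul_apply]; exact hc w⟩
    choose c hc using hab
    set w₀ : Ω := Classical.arbitrary Ω
    have hcsum : ∑ i, c i = 1 := by
      rw [← hsum w₀]
      exact Finset.sum_congr rfl fun i _ => (hc i w₀).symm
    obtain ⟨k, hk⟩ : ∃ k, c k ≠ 0 := by
      by_contra h'
      push_neg at h'
      rw [Finset.sum_congr rfl fun i _ => h' i] at hcsum
      simp at hcsum
    -- c k = r² with r = |a k w₀| f w₀
    have hckw : ∀ w, c k = ((Complex.normSq (a k w) * (f w * f w) : ℝ) : ℂ) := by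
      intro w
      rw [← hc k w, hconj w k]
      push_cast
      rw [← Complex.mul_conj]
      ring
    set r : ℝ := ‖a k w₀‖ * f w₀ with hrdef
    have hr : 0 < r := by
      have hak : a k w₀ ≠ 0 := by
        intro h0
        apply hk
        rw [hckw w₀, h0]
        simp
      exact mul_pos (by simpa using hak) (hf w₀)
    have hck : c k = ((r ^ 2 : ℝ) : ℂ) := by
      rw [hckw w₀]
      congr 1
      rw [hrdef, mul_pow, Complex.sq_norm]
      ring
    -- |a k w| * f w = r for all w
    have habs : ∀ w, ‖a k w‖ * f w = r := by
      intro w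
      have hsq : (‖a k w‖ * f w) ^ 2 = r ^ 2 := by
        have h1 := (hckw w).symm.trans hck
        have h2 : Complex.normSq (a k w) * (f w * f w) = r ^ 2 := by
          exact_mod_cast h1
        rw [mul_pow, Complex.sq_norm]
        linarith [h2]
      have hnn : 0 ≤ ‖a k w‖ * f w :=
        mul_nonneg (norm_nonneg _) (hf w).le
      calc ‖a k w‖ * f w
          = Real.sqrt ((‖a k w‖ * f w) ^ 2) := (Real.sqrt_sq hnn).symm
        _ = Real.sqrt (r ^ 2) := by rw [hsq]
        _ = r := Real.sqrt_sq hr.le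
    refine ⟨((r : ℂ))⁻¹ • b k, A.smul_mem (hb k) _,
      ⟨((r : ℂ) / c k) • a k, A.smul_mem (ha k) _, ?_⟩, ?_⟩
    · ext w
      have hcw := hc k w
      have hrne : (r : ℂ) ≠ 0 := by exact_mod_cast hr.ne'
      simp only [ContinuousMap.mul_apply, ContinuousMap.smul_apply, smul_eq_mul,
        ContinuousMap.one_apply]
      field_simp
      linear_combination hcw
    · intro w
      simp only [ContinuousMap.smul_apply, smul_eq_mul, norm_mul, norm_inv,
        Complex.norm_real, Real.norm_eq_abs]
      rw [hconj w k, norm_mul, norm_mul, Complex.norm_conj, Complex.norm_real, Real.norm_eq_abs,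
        abs_of_pos (hf w), abs_of_pos hr]
      rw [show ‖a k w‖ * f w * f w = r * f w by rw [← habs w]]
      exact (inv_mul_cancel_left₀ hr.ne' _).symm
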